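/- Totally unimodular matrices are closed under pivoting: if T = [[1, c], [b, D]] is totally unimodular (with scalar top-left entry 1, row vector c, column vector b, matrix D), then the pivoted matrix [[-1, c], [b, D - bc]] is totally unimodular. -/

import Mathlib

/-- A real matrix is totally unimodular if every square submatrix has determinant 0, +1 or -1. -/
def IsTU {m n : Type*} (A : Matrix m n ℝ) : Prop :=
  ∀ (k : ℕ) (f : Fin k → m) (g : Fin k → n), Function.Injective f → Function.Injective g →
    (A.submatrix f g).det ∈ ({0, 1, -1} : Set ℝ)

namespace TUPivotAux

open Matrix

lemma memS_neg {x : ℝ} (hx : x ∈ ({0, 1, -1} : Set ℝ)) : -x ∈ ({0, 1, -1} : Set ℝ) := by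
  simp only [Set.mem_insert_iff, Set.mem_singleton_iff] at hx ⊢
  rcases hx with rfl | rfl | rfl <;> norm_num

lemma memS_sign_mul {s x : ℝ} (hs : s = 1 ∨ s = -1) (hx : x ∈ ({0, 1, -1} : Set ℝ)) :
    s * x ∈ ({0, 1, -1} : Set ℝ) := by
  rcases hs with rfl | rfl
  · simpa
  · simpa using memS_neg hx

lemma IsTU.transpose {m n : Type*} {A : Matrix m n ℝ} (hA : IsTU A) : IsTU Aᵀ := by
  intro k f g hf hg
  rw [← Matrix.transpose_submatrix, Matrix.det_transpose]
  exact hA k g f hg hf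

lemma key {m n : Type*} (b : m → ℝ) (c : n → ℝ) (D : Matrix m n ℝ)
    (hT : IsTU (Matrix.fromBlocks (Matrix.of fun (_ : Unit) (_ : Unit) => (1 : ℝ))
      (Matrix.replicateRow Unit c) (Matrix.replicateCol Unit b) D))
    (k : ℕ) (f : Fin k → Unit ⊕ m) (g : Fin k → Unit ⊕ n)
    (hf : Function.Injective f) (hg : Function.Injective g)
    (hcase : (Sum.inl () ∈ Set.range f) ∨ (Sum.inl () ∉ Set.range g)) :
    ((Matrix.fromBlocks (Matrix.of fun (_ : Unit) (_ : Unit) => (-1 : ℝ))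
      (Matrix.replicateRow Unit c) (Matrix.replicateCol Unit b) (D - Matrix.vecMulVec b c)).submatrix f g).det
      ∈ ({0, 1, -1} : Set ℝ) := by
  set T := Matrix.fromBlocks (Matrix.of fun (_ : Unit) (_ : Unit) => (1 : ℝ))
      (Matrix.replicateRow Unit c) (Matrix.replicateCol Unit b) D with hTdef
  set T' := Matrix.fromBlocks (Matrix.of fun (_ : Unit) (_ : Unit) => (-1 : ℝ))
      (Matrix.replicateRow Unit c) (Matrix.replicateCol Unit b) (D - Matrix.vecMulVec b c) with hT'def
  by_cases hfin : Sum.inl () ∈ Set.range f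
  · -- pivot row is present
    obtain ⟨i₀, hi₀⟩ := hfin
    set T'' := Matrix.fromBlocks (Matrix.of fun (_ : Unit) (_ : Unit) => (-1 : ℝ))
        (Matrix.replicateRow Unit c) (0 : Matrix m Unit ℝ) D with hT''def
    have hrow : (T'.submatrix f g).det = (T''.submatrix f g).det := by
      apply Matrix.det_eq_of_forall_row_eq_smul_add_const
        (fun i => Sum.elim (fun _ => (0 : ℝ)) (fun a => -b a) (f i)) i₀
      · rw [hi₀]; rfl
      · intro i j
        simp only [Matrix.submatrix_apply, hi₀]
        rcases f i with u | a <;> rcases g j with v | x <;>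
          simp [hT'def, hT''def, Matrix.vecMulVec_apply] <;> ring
    rw [hrow]
    by_cases hgin : Sum.inl () ∈ Set.range g
    · -- both pivot row and pivot column present
      obtain ⟨j₀, hj₀⟩ := hgin
      cases k with
      | zero => exact i₀.elim0
      | succ k =>
        set σ : Equiv.Perm (Fin (k + 1)) := Equiv.swap 0 i₀ with hσdef
        set τ : Equiv.Perm (Fin (k + 1)) := Equiv.swap 0 j₀ with hτdef
        have hσ0 : f (σ 0) = Sum.inl () := by rw [hσdef]; simp [Equiv.swap_apply_left, hi₀]
        have hτ0 : g (τ 0) = Sum.inl () := by rw [hτdef]; simp [Equiv.swap_apply_left, hj₀]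
        set A := T''.submatrix (f ∘ σ) (g ∘ τ) with hAdef
        have hA1 : A = ((T''.submatrix f g).submatrix id τ).submatrix σ id := rfl
        have hsign : A.det =
            ((Equiv.Perm.sign σ : ℤ) : ℝ) * ((Equiv.Perm.sign τ : ℤ) : ℝ)
              * (T''.submatrix f g).det := by
          rw [hA1, Matrix.det_permute, Matrix.det_permute']
          push_cast
          ring
        -- entries of column 0 of A
        have hfr : ∀ i : Fin k, ∃ a : m, f (σ i.succ) = Sum.inr a := by
          intro i
          rcases hfa : f (σ i.succ) with u | a
          · exfalso
            have : σ i.succ = σ 0 := hf (by rw [hσ0, hfa])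
            exact (Fin.succ_ne_zero i) (σ.injective this)
          · exact ⟨a, rfl⟩
        have hgr : ∀ j : Fin k, ∃ x : n, g (τ j.succ) = Sum.inr x := by
          intro j
          rcases hga : g (τ j.succ) with u | x
          · exfalso
            have : τ j.succ = τ 0 := hg (by rw [hτ0, hga])
            exact (Fin.succ_ne_zero j) (τ.injective this)
          · exact ⟨x, rfl⟩
        have hcol0 : ∀ i : Fin k, A i.succ 0 = 0 := by
          intro i
          obtain ⟨a, ha⟩ := hfr i
          simp [hAdef, ha, hτ0, hT''def]
        have hA00 : A 0 0 = -1 := by simp [hAdef, hσ0, hτ0, hT''def]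
        have hsub : A.submatrix Fin.succ Fin.succ
            = T.submatrix (f ∘ σ ∘ Fin.succ) (g ∘ τ ∘ Fin.succ) := by
          ext i j
          obtain ⟨a, ha⟩ := hfr i
          obtain ⟨x, hx⟩ := hgr j
          simp [hAdef, ha, hx, hT''def, hTdef]
        have hAdet : A.det = - (T.submatrix (f ∘ σ ∘ Fin.succ) (g ∘ τ ∘ Fin.succ)).det := by
          rw [Matrix.det_succ_column_zero, Fin.sum_univ_succ]
          simp [hcol0, hA00, hsub]
        have hmem : (T.submatrix (f ∘ σ ∘ Fin.succ) (g ∘ τ ∘ Fin.succ)).det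
            ∈ ({0, 1, -1} : Set ℝ) :=
          hT k _ _ (hf.comp (σ.injective.comp (Fin.succ_injective k)))
            (hg.comp (τ.injective.comp (Fin.succ_injective k)))
        have hpm : (T''.submatrix f g).det
              = (T.submatrix (f ∘ σ ∘ Fin.succ) (g ∘ τ ∘ Fin.succ)).det
            ∨ (T''.submatrix f g).det
              = -(T.submatrix (f ∘ σ ∘ Fin.succ) (g ∘ τ ∘ Fin.succ)).det := by
          rw [hAdet] at hsign
          rcases Int.units_eq_one_or (Equiv.Perm.sign σ) with h1 | h1 <;>
            rcases Int.units_eq_one_or (Equiv.Perm.sign τ) with h2 | h2 <;>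
            rw [h1, h2] at hsign <;> push_cast at hsign <;>
            [right; left; left; right] <;> linarith
        rcases hpm with h | h
        · rw [h]; exact hmem
        · rw [h]; exact memS_neg hmem
    · -- pivot row present, pivot column absent
      have hTT : T''.submatrix f g = T.submatrix f g := by
        ext i j
        rcases hgj : g j with v | x
        · exact absurd ⟨j, by rw [hgj]⟩ hgin
        · rcases hfi : f i with u | a <;> simp [hT''def, hTdef, hgj, hfi]
      rw [hTT]
      exact hT k f g hf hg
  · -- pivot row absent; by hcase, pivot column absent too
    have hgn : Sum.inl () ∉ Set.range g := hcase.resolve_left hfin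
    set T''' := Matrix.fromBlocks (Matrix.of fun (_ : Unit) (_ : Unit) => (1 : ℝ))
        (Matrix.replicateRow Unit c) (0 : Matrix m Unit ℝ) (D - Matrix.vecMulVec b c) with hT3def
    set F : Fin (k + 1) → Unit ⊕ m := Fin.cases (Sum.inl ()) f with hFdef
    set G : Fin (k + 1) → Unit ⊕ n := Fin.cases (Sum.inl ()) g with hGdef
    have hF0 : F 0 = Sum.inl () := rfl
    have hFs : ∀ i, F i.succ = f i := fun i => by simp [hFdef]
    have hG0 : G 0 = Sum.inl () := rfl
    have hGs : ∀ j, G j.succ = g j := fun j => by simp [hGdef]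
    have hF : Function.Injective F := by
      intro i j hij
      rcases Fin.eq_zero_or_eq_succ i with rfl | ⟨i', rfl⟩ <;>
        rcases Fin.eq_zero_or_eq_succ j with rfl | ⟨j', rfl⟩
      · rfl
      · rw [hF0, hFs] at hij; exact absurd ⟨j', hij.symm⟩ hfin
      · rw [hF0, hFs] at hij; exact absurd ⟨i', hij⟩ hfin
      · rw [hFs, hFs] at hij; rw [hf hij]
    have hG : Function.Injective G := by
      intro i j hij
      rcases Fin.eq_zero_or_eq_succ i with rfl | ⟨i', rfl⟩ <;>
        rcases Fin.eq_zero_or_eq_succ j with rfl | ⟨j', rfl⟩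
      · rfl
      · rw [hG0, hGs] at hij; exact absurd ⟨j', hij.symm⟩ hgn
      · rw [hG0, hGs] at hij; exact absurd ⟨i', hij⟩ hgn
      · rw [hGs, hGs] at hij; rw [hg hij]
    have hkey : (T.submatrix F G).det ∈ ({0, 1, -1} : Set ℝ) := hT (k + 1) F G hF hG
    have hred : (T.submatrix F G).det = (T'''.submatrix F G).det := by
      apply Matrix.det_eq_of_forall_row_eq_smul_add_const
        (fun i => Sum.elim (fun _ => (0 : ℝ)) b (F i)) 0
      · rw [hF0]; rfl
      · intro i j
        simp only [Matrix.submatrix_apply, hF0]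
        rcases F i with u | a <;> rcases G j with v | x <;>
          simp [hTdef, hT3def, Matrix.vecMulVec_apply] <;> ring
    have hfr : ∀ i : Fin k, ∃ a : m, f i = Sum.inr a := by
      intro i
      rcases hfa : f i with u | a
      · exact absurd ⟨i, by rw [hfa]⟩ hfin
      · exact ⟨a, rfl⟩
    have hgr : ∀ j : Fin k, ∃ x : n, g j = Sum.inr x := by
      intro j
      rcases hga : g j with u | x
      · exact absurd ⟨j, by rw [hga]⟩ hgn
      · exact ⟨x, rfl⟩
    have hcol0 : ∀ i : Fin k, T''' (F i.succ) (G 0) = 0 := by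
      intro i
      obtain ⟨a, ha⟩ := hfr i
      simp [hFs, hG0, ha, hT3def]
    have hA00 : T''' (F 0) (G 0) = 1 := by simp [hF0, hG0, hT3def]
    have hsub : (T'''.submatrix F G).submatrix Fin.succ Fin.succ
        = T'.submatrix f g := by
      ext i j
      obtain ⟨a, ha⟩ := hfr i
      obtain ⟨x, hx⟩ := hgr j
      simp [hFs, hGs, ha, hx, hT3def, hT'def]
    have hdet3 : (T'''.submatrix F G).det = (T'.submatrix f g).det := by
      rw [Matrix.det_succ_column_zero, Fin.sum_univ_succ]
      simp [hcol0, hA00, hsub]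
    rw [← hdet3, ← hred]
    exact hkey

end TUPivotAux

open Matrix

/-- Totally unimodular matrices are closed under pivoting: if `[[1, c], [b, D]]` is TU then so
is its pivot `[[-1, c], [b, D - bc]]` on the top-left entry. -/
theorem TU_closed_under_pivot {m n : Type*}
    (b : m → ℝ) (c : n → ℝ) (D : Matrix m n ℝ)
    (hT : IsTU (Matrix.fromBlocks (Matrix.of fun (_ : Unit) (_ : Unit) => (1 : ℝ))
      (Matrix.replicateRow Unit c) (Matrix.replicateCol Unit b) D)) :
    IsTU (Matrix.fromBlocks (Matrix.of fun (_ : Unit) (_ : Unit) => (-1 : ℝ))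
      (Matrix.replicateRow Unit c) (Matrix.replicateCol Unit b) (D - Matrix.vecMulVec b c)) := by
  intro k f g hf hg
  by_cases hcase : (Sum.inl () ∈ Set.range f) ∨ (Sum.inl () ∉ Set.range g)
  · exact TUPivotAux.key b c D hT k f g hf hg hcase
  · push_neg at hcase
    have hTt : IsTU (Matrix.fromBlocks (Matrix.of fun (_ : Unit) (_ : Unit) => (1 : ℝ))
        (Matrix.replicateRow Unit b) (Matrix.replicateCol Unit c) Dᵀ) := by
      have h := TUPivotAux.IsTU.transpose hT
      have he : (Matrix.fromBlocks (Matrix.of fun (_ : Unit) (_ : Unit) => (1 : ℝ))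
          (Matrix.replicateRow Unit c) (Matrix.replicateCol Unit b) D)ᵀ
          = Matrix.fromBlocks (Matrix.of fun (_ : Unit) (_ : Unit) => (1 : ℝ))
          (Matrix.replicateRow Unit b) (Matrix.replicateCol Unit c) Dᵀ := by
        ext i j
        rcases i with u | p <;> rcases j with v | a <;> simp
      rwa [he] at h
    have hkey := TUPivotAux.key c b Dᵀ hTt k g f hg hf (Or.inl hcase.2)
    have he' : (Matrix.fromBlocks (Matrix.of fun (_ : Unit) (_ : Unit) => (-1 : ℝ))
        (Matrix.replicateRow Unit c) (Matrix.replicateCol Unit b) (D - Matrix.vecMulVec b c))ᵀ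
        = Matrix.fromBlocks (Matrix.of fun (_ : Unit) (_ : Unit) => (-1 : ℝ))
        (Matrix.replicateRow Unit b) (Matrix.replicateCol Unit c) (Dᵀ - Matrix.vecMulVec c b) := by
      ext i j
      rcases i with u | p <;> rcases j with v | a <;>
        simp [Matrix.vecMulVec_apply, mul_comm]
    rw [← Matrix.det_transpose, Matrix.transpose_submatrix, he']
    exact hkey
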